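/- For all integers r ≥ 0 and n ≥ 1, the following identity of quantum binomial coefficients holds in ℚ(v): Σ_{k=0}^{r} v^{−kr} · (−1)^{k−r} · binom(n−k+r, n) · binom(r+n+1, k) = v^{−r(n+r+1)}. -/

import Mathlib

/-- The quantum integer `[n] = (v^n - v^{-n})/(v - v^{-1})` in `ℚ(v)`. -/
noncomputable def qint (n : ℤ) : RatFunc ℚ :=
  (RatFunc.X ^ n - RatFunc.X ^ (-n)) / (RatFunc.X - RatFunc.X⁻¹)

/-- The quantum factorial `[n]! = [n][n-1]⋯[1]`, with `[0]! = 1`. -/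
noncomputable def qfact (n : ℕ) : RatFunc ℚ :=
  ∏ i ∈ Finset.range n, qint (i + 1)

/-- The quantum binomial coefficient `binom(n, k) = [n][n-1]⋯[n-k+1]/[k]!`
for `n : ℤ` and `k : ℕ`. -/
noncomputable def qbinom (n : ℤ) (k : ℕ) : RatFunc ℚ :=
  (∏ i ∈ Finset.range k, qint (n - i)) / qfact k


open Finset

local notation "V" => (RatFunc.X : RatFunc ℚ)

lemma X_ne_zero : (RatFunc.X : RatFunc ℚ) ≠ 0 := RatFunc.X_ne_zero

lemma qint_zero : qint 0 = 0 := by simp [qint]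

lemma qint_neg (n : ℤ) : qint (-n) = - qint n := by
  unfold qint; rw [neg_neg, ← neg_div]; ring_nf

lemma qint_add (a b : ℤ) : qint (a + b) = V ^ b * qint a + V ^ (-a) * qint b := by
  unfold qint
  rw [← mul_div_assoc, ← mul_div_assoc, ← add_div]
  congr 1
  rw [neg_add, zpow_add₀ X_ne_zero, zpow_add₀ X_ne_zero]
  ring

lemma X_pow_ne_one (n : ℕ) (h : 0 < n) : (V ^ n) ≠ 1 := by
  intro hh
  have h1 : algebraMap (Polynomial ℚ) (RatFunc ℚ) (Polynomial.X ^ n) =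
      algebraMap (Polynomial ℚ) (RatFunc ℚ) 1 := by
    rw [map_pow, map_one, RatFunc.algebraMap_X, hh]
  have h2 := RatFunc.algebraMap_injective ℚ h1
  have := congrArg Polynomial.natDegree h2
  simp [Polynomial.natDegree_X_pow] at this
  omega

lemma qint_nat_ne_zero (n : ℕ) (h : 0 < n) : qint n ≠ 0 := by
  unfold qint
  apply div_ne_zero
  · intro hh
    have hx : V ^ (n:ℤ) = V ^ (-(n:ℤ)) := sub_eq_zero.mp hh
    have : V ^ (n:ℤ) * V ^ (n:ℤ) = V ^ (-(n:ℤ)) * V ^ (n:ℤ) := by rw [hx]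
    rw [← zpow_add₀ X_ne_zero, ← zpow_add₀ X_ne_zero, neg_add_cancel, zpow_zero] at this
    have h2n : (V : RatFunc ℚ) ^ (2*n) = 1 := by
      rw [← zpow_natCast]
      push_cast
      rw [two_mul]
      rw [zpow_add₀ X_ne_zero] at this ⊢
      exact this
    exact X_pow_ne_one (2*n) (by omega) h2n
  · intro hh
    have hx : (V : RatFunc ℚ) = V⁻¹ := sub_eq_zero.mp hh
    have : (V : RatFunc ℚ) ^ 2 = 1 := by
      rw [sq]
      nth_rewrite 2 [hx]
      exact mul_inv_cancel₀ X_ne_zero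
    exact X_pow_ne_one 2 (by omega) this

lemma qint_ne_zero (n : ℤ) (h : n ≠ 0) : qint n ≠ 0 := by
  rcases n.lt_or_lt_of_ne h with hl | hl
  · obtain ⟨m, rfl⟩ : ∃ m : ℕ, n = -(m:ℤ) := ⟨n.natAbs, by omega⟩
    rw [qint_neg, neg_ne_zero]
    exact qint_nat_ne_zero m (by omega)
  · obtain ⟨m, rfl⟩ : ∃ m : ℕ, n = (m:ℤ) := ⟨n.natAbs, by omega⟩
    exact qint_nat_ne_zero m (by omega)

lemma qfact_succ (n : ℕ) : qfact (n+1) = qfact n * qint (n+1) := by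
  unfold qfact
  rw [Finset.prod_range_succ]

lemma qfact_ne_zero (n : ℕ) : qfact n ≠ 0 := by
  unfold qfact
  apply Finset.prod_ne_zero_iff.mpr
  intro i _
  exact qint_ne_zero _ (by omega)

lemma qbinom_zero (n : ℤ) : qbinom n 0 = 1 := by
  simp [qbinom, qfact]

lemma qint_succ_ne_zero (k : ℕ) : qint ((k:ℤ)+1) ≠ 0 :=
  qint_ne_zero _ (by omega)

lemma qbinom_succ_bot (t : ℤ) (k : ℕ) :
    qbinom t (k+1) = qbinom t k * qint (t - k) / qint ((k:ℤ)+1) := by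
  unfold qbinom
  rw [Finset.prod_range_succ, qfact_succ]
  rw [show ((k:ℤ)+1 : ℤ) = ((k+1 : ℕ) : ℤ) by push_cast; ring]
  field_simp

lemma qbinom_succ_top (t : ℤ) (k : ℕ) :
    qbinom t (k+1) = qbinom (t-1) k * qint t / qint ((k:ℤ)+1) := by
  unfold qbinom
  rw [Finset.prod_range_succ', qfact_succ]
  rw [show ((k:ℤ)+1 : ℤ) = ((k+1 : ℕ) : ℤ) by push_cast; ring]
  rw [Finset.prod_congr rfl (fun i _ => show qint (t - (i+1:ℕ)) = qint (t - 1 - i) by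
    congr 1; push_cast; ring)]
  rw [show t - (0:ℕ) = t by push_cast; ring]
  field_simp

lemma pascal₁ (t : ℤ) (k : ℕ) :
    qbinom t (k+1) = V^((k:ℤ)+1) * qbinom (t-1) (k+1) + V^((k:ℤ)+1-t) * qbinom (t-1) k := by
  rw [qbinom_succ_top t k, qbinom_succ_bot (t-1) k]
  have h := qint_add (t - 1 - (k:ℤ)) ((k:ℤ)+1)
  rw [show t - 1 - (k:ℤ) + ((k:ℤ)+1) = t by ring,
      show -(t-1-(k:ℤ)) = (k:ℤ)+1-t by ring] at h
  rw [h]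
  field_simp [qint_succ_ne_zero k]

lemma pascal₂ (t : ℤ) (k : ℕ) :
    qbinom t (k+1) = V^(-(k:ℤ)-1) * qbinom (t-1) (k+1) + V^(t-(k:ℤ)-1) * qbinom (t-1) k := by
  rw [qbinom_succ_top t k, qbinom_succ_bot (t-1) k]
  have h := qint_add ((k:ℤ)+1) (t - 1 - (k:ℤ))
  rw [show (k:ℤ)+1 + (t - 1 - (k:ℤ)) = t by ring,
      show -((k:ℤ)+1) = -(k:ℤ)-1 by ring,
      show t - 1 - (k:ℤ) = t - (k:ℤ) - 1 by ring] at h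
  rw [h]
  rw [show t - 1 - (k:ℤ) = t - (k:ℤ) - 1 by ring]
  field_simp [qint_succ_ne_zero k]
  ring

lemma fuse (a b c : ℤ) (x y : RatFunc ℚ) (h : c = a + b) :
    V^a * (V^b * x) * y = V^c * x * y := by
  rw [h, zpow_add₀ X_ne_zero]; ring

lemma fuse2 (a b c : ℤ) (x y : RatFunc ℚ) (h : c = a + b) :
    V^a * x * (V^b * y) = V^c * x * y := by
  rw [h, zpow_add₀ X_ne_zero]; ring

noncomputable def Ssum (m p : ℤ) (r : ℕ) : RatFunc ℚ :=
  ∑ k ∈ Finset.range (r+1), V ^ (m*((r:ℤ)-k) - p*k) * qbinom m k * qbinom p (r-k)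

noncomputable def Uf (m p : ℤ) (r : ℕ) (k : ℕ) : RatFunc ℚ :=
  V ^ ((m+1)*((r:ℤ)-k) - p*k - k) * qbinom m k * qbinom p (r-k)

noncomputable def Tf (m p : ℤ) (r : ℕ) (k : ℕ) : RatFunc ℚ :=
  V ^ ((m+1)*((r:ℤ)-((k:ℤ)+1)) - p*((k:ℤ)+1) + m - k) * qbinom m k * qbinom p (r-(k+1))

lemma hL (m p : ℤ) (r : ℕ) :
    Ssum (m+1) p r = (∑ k ∈ range (r+1), Uf m p r k) + ∑ k ∈ range r, Tf m p r k := by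
  unfold Ssum
  rw [Finset.sum_range_succ' (fun k => V ^ ((m+1)*((r:ℤ)-k) - p*k) * qbinom (m+1) k * qbinom p (r-k)) r,
      Finset.sum_range_succ' (fun k => Uf m p r k) r]
  have h0 : V ^ ((m+1)*((r:ℤ)-(0:ℕ)) - p*(0:ℕ)) * qbinom (m+1) 0 * qbinom p (r-0)
      = Uf m p r 0 := by
    unfold Uf
    rw [qbinom_zero, qbinom_zero, show ((m+1)*((r:ℤ)-((0:ℕ):ℤ)) - p*((0:ℕ):ℤ) - ((0:ℕ):ℤ)) = (m+1)*((r:ℤ)-((0:ℕ):ℤ)) - p*((0:ℕ):ℤ) by push_cast; ring]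
  have hpt : ∀ k : ℕ, V ^ ((m+1)*((r:ℤ)-(k+1:ℕ)) - p*(k+1:ℕ)) * qbinom (m+1) (k+1) * qbinom p (r-(k+1))
      = Uf m p r (k+1) + Tf m p r k := by
    intro k
    rw [pascal₂ (m+1) k, show m+1-1 = m by ring, mul_add, add_mul]
    unfold Uf Tf
    rw [fuse _ _ ((m+1)*((r:ℤ)-((k+1:ℕ):ℤ)) - p*((k+1:ℕ):ℤ) - ((k+1:ℕ):ℤ)) _ _ (by push_cast; ring),
        fuse _ _ ((m+1)*((r:ℤ)-((k:ℤ)+1)) - p*((k:ℤ)+1) + m - (k:ℤ)) _ _ (by push_cast; ring)]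
  rw [Finset.sum_congr rfl (fun k _ => hpt k), Finset.sum_add_distrib, h0]
  ring

lemma hR (m p : ℤ) (r : ℕ) :
    Ssum m (p+1) r = (∑ k ∈ range (r+1), Uf m p r k) + ∑ k ∈ range r, Tf m p r k := by
  unfold Ssum
  rw [Finset.sum_range_succ (fun k => V ^ (m*((r:ℤ)-k) - (p+1)*k) * qbinom m k * qbinom (p+1) (r-k)) r,
      Finset.sum_range_succ (fun k => Uf m p r k) r]
  have h0 : V ^ (m*((r:ℤ)-(r:ℕ)) - (p+1)*(r:ℕ)) * qbinom m r * qbinom (p+1) (r-r)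
      = Uf m p r r := by
    unfold Uf
    rw [Nat.sub_self, qbinom_zero, qbinom_zero,
      show m*((r:ℤ)-((r:ℕ):ℤ)) - (p+1)*((r:ℕ):ℤ) = (m+1)*((r:ℤ)-((r:ℕ):ℤ)) - p*((r:ℕ):ℤ) - ((r:ℕ):ℤ) by push_cast; ring]
  have hpt : ∀ k ∈ range r, V ^ (m*((r:ℤ)-(k:ℕ)) - (p+1)*(k:ℕ)) * qbinom m k * qbinom (p+1) (r-k)
      = Uf m p r k + Tf m p r k := by
    intro k hk
    have hkr : k + 1 ≤ r := by simpa using hk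
    have hsub : r - k = (r - (k+1)) + 1 := by omega
    have hc : ((r - (k+1) : ℕ) : ℤ) = (r:ℤ) - (k:ℤ) - 1 := by omega
    rw [hsub, pascal₁ (p+1) (r - (k+1)), show p+1-1 = p by ring, mul_add]
    unfold Uf Tf
    rw [← hsub,
        fuse2 _ _ ((m+1)*((r:ℤ)-(k:ℕ)) - p*(k:ℕ) - (k:ℕ)) _ _ (by rw [hc]; push_cast; ring),
        fuse2 _ _ ((m+1)*((r:ℤ)-((k:ℤ)+1)) - p*((k:ℤ)+1) + m - (k:ℤ)) _ _ (by rw [hc]; push_cast; ring)]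
  rw [Finset.sum_congr rfl hpt, Finset.sum_add_distrib, h0]
  ring

lemma transfer (m p : ℤ) (r : ℕ) : Ssum (m+1) p r = Ssum m (p+1) r := by
  rw [hL, hR]

lemma qbinom_zero_left (k : ℕ) : qbinom 0 (k+1) = 0 := by
  unfold qbinom
  rw [Finset.prod_eq_zero (i := 0) (Finset.mem_range.mpr (Nat.succ_pos k))
    (by norm_num [qint_zero]), zero_div]

lemma vdm (m : ℕ) : ∀ (p : ℤ) (r : ℕ), qbinom ((m:ℤ) + p) r = Ssum (m:ℤ) p r := by
  induction m with
  | zero =>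
    intro p r
    unfold Ssum
    rw [Finset.sum_eq_single_of_mem 0 (Finset.mem_range.mpr (Nat.succ_pos r))]
    · simp [qbinom_zero]
    · intro k _ hk
      obtain ⟨j, rfl⟩ := Nat.exists_eq_succ_of_ne_zero hk
      norm_num [qbinom_zero_left j]
  | succ m ih =>
    intro p r
    rw [show ((m+1:ℕ):ℤ) = (m:ℤ)+1 by push_cast; ring, transfer,
      show (m:ℤ)+1+p = (m:ℤ)+(p+1) by ring]
    exact ih (p+1) r

lemma prod_top (M : ℕ) : ∀ j, j ≤ M →
    (∏ i ∈ range j, qint ((M:ℤ) - i)) * qfact (M - j) = qfact M := by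
  intro j
  induction j with
  | zero => simp
  | succ j ih =>
    intro h
    rw [Finset.prod_range_succ, mul_assoc]
    have hq : qint ((M:ℤ) - j) * qfact (M - (j+1)) = qfact (M - j) := by
      have h2 : M - j = (M - (j+1)) + 1 := by omega
      rw [h2, qfact_succ, show ((M - (j+1) : ℕ) : ℤ) + 1 = (M:ℤ) - j by omega]
      ring
    rw [hq, ih (by omega)]

lemma qbinom_symm (M j : ℕ) (h : j ≤ M) : qbinom (M:ℤ) j = qbinom (M:ℤ) (M - j) := by
  unfold qbinom
  have h1 := prod_top M j h
  have h2 := prod_top M (M - j) (by omega)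
  rw [show M - (M - j) = j from by omega] at h2
  rw [div_eq_div_iff (qfact_ne_zero j) (qfact_ne_zero (M-j))]
  exact h1.trans h2.symm

lemma qbinom_self (r : ℕ) : qbinom (r:ℤ) r = 1 := by
  unfold qbinom
  have h := prod_top r r (le_refl r)
  rw [Nat.sub_self, show qfact 0 = 1 from by simp [qfact], mul_one] at h
  rw [h]
  exact div_self (qfact_ne_zero r)

lemma qbinom_neg (a : ℤ) (k : ℕ) : qbinom (-a) k = (-1)^k * qbinom (a - 1 + k) k := by
  unfold qbinom
  rw [← mul_div_assoc]
  congr 1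
  calc ∏ i ∈ range k, qint (-a - i)
      = ∏ i ∈ range k, (-1) * qint (a + i) := by
        refine Finset.prod_congr rfl fun i _ => ?_
        rw [show -a - (i:ℤ) = -(a + i) by ring, qint_neg]; ring
    _ = (-1)^k * ∏ i ∈ range k, qint (a + i) := by
        rw [Finset.prod_mul_distrib, Finset.prod_const, Finset.card_range]
    _ = (-1)^k * ∏ i ∈ range k, qint (a - 1 + k - i) := by
        congr 1
        rw [← Finset.prod_range_reflect (fun i => qint (a + i)) k]
        refine Finset.prod_congr rfl fun j hj => ?_
        have hjk : j < k := Finset.mem_range.mp hj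
        congr 1
        omega

lemma neg_one_zpow (k r : ℕ) (h : k ≤ r) :
    (-1 : RatFunc ℚ)^((k:ℤ)-(r:ℤ)) = (-1 : RatFunc ℚ)^(r-k : ℕ) := by
  have h1 : (k:ℤ)-(r:ℤ) = -((r-k : ℕ) : ℤ) := by omega
  rw [h1, zpow_neg, zpow_natCast, ← inv_pow, inv_neg, inv_one]


/-- For all integers `r ≥ 0` and `n ≥ 1`:
`Σ_{k=0}^{r} v^{-kr} (-1)^{k-r} binom(n-k+r, n) binom(r+n+1, k) = v^{-r(n+r+1)}`. -/
theorem quantum_binomial_sum_identity (r n : ℕ) (hn : 1 ≤ n) :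
    ∑ k ∈ Finset.range (r + 1),
        RatFunc.X ^ (-(k : ℤ) * r) * (-1 : RatFunc ℚ) ^ ((k : ℤ) - r) *
          qbinom ((n : ℤ) - k + r) n * qbinom ((r : ℤ) + n + 1) k
      = RatFunc.X ^ (-(r : ℤ) * ((n : ℤ) + r + 1)) := by
  have key : ∀ k ∈ Finset.range (r+1),
      RatFunc.X ^ (-(k : ℤ) * r) * (-1 : RatFunc ℚ) ^ ((k : ℤ) - r) *
          qbinom ((n : ℤ) - k + r) n * qbinom ((r : ℤ) + n + 1) k
      = V ^ (-(r:ℤ) * ((n:ℤ) + r + 1)) *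
          (V ^ (((r+n+1:ℕ):ℤ)*((r:ℤ)-k) - (-(n:ℤ)-1)*k) * qbinom ((r+n+1:ℕ):ℤ) k *
            qbinom (-(n:ℤ)-1) (r-k)) := by
    intro k hk
    have hkr : k ≤ r := Nat.lt_succ_iff.mp (Finset.mem_range.mp hk)
    rw [show (n:ℤ)-(k:ℤ)+(r:ℤ) = ((n+r-k : ℕ):ℤ) by omega]
    rw [qbinom_symm (n+r-k) n (by omega), show n+r-k-n = r-k from by omega]
    have hneg : qbinom (((n+r-k:ℕ)):ℤ) (r-k)
        = (-1 : RatFunc ℚ)^(r-k:ℕ) * qbinom (-(n:ℤ)-1) (r-k) := by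
      have h := qbinom_neg ((n:ℤ)+1) (r-k)
      rw [show -((n:ℤ)+1) = -(n:ℤ)-1 by ring,
          show (n:ℤ)+1-1+((r-k:ℕ):ℤ) = ((n+r-k:ℕ):ℤ) by omega] at h
      rw [h, ← mul_assoc, ← mul_pow]
      norm_num
    rw [hneg, neg_one_zpow k r hkr]
    rw [show (r:ℤ)+(n:ℤ)+1 = ((r+n+1:ℕ):ℤ) by push_cast; ring]
    rw [show (V : RatFunc ℚ) ^ (-(k:ℤ)*r) = V ^ (-(r:ℤ)*((n:ℤ)+r+1)) *
          V ^ (((r+n+1:ℕ):ℤ)*((r:ℤ)-k) - (-(n:ℤ)-1)*k) from by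
        rw [← zpow_add₀ X_ne_zero]; congr 1; push_cast; ring]
    have hc : ((-1:RatFunc ℚ)^(r-k)) * ((-1:RatFunc ℚ)^(r-k)) = 1 := by
      rw [← mul_pow]; norm_num
    linear_combination (V ^ (-(r:ℤ)*((n:ℤ)+(r:ℤ)+1)) *
      V ^ (((r+n+1:ℕ):ℤ)*((r:ℤ)-(k:ℤ)) - (-(n:ℤ)-1)*(k:ℤ)) *
      qbinom (-(n:ℤ)-1) (r-k) * qbinom (((r+n+1:ℕ)):ℤ) k) * hc
  rw [Finset.sum_congr rfl key, ← Finset.mul_sum]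
  have hS : Ssum (((r+n+1:ℕ)):ℤ) (-(n:ℤ)-1) r
      = ∑ k ∈ Finset.range (r+1), V ^ (((r+n+1:ℕ):ℤ)*((r:ℤ)-k) - (-(n:ℤ)-1)*k) *
          qbinom ((r+n+1:ℕ):ℤ) k * qbinom (-(n:ℤ)-1) (r-k) := rfl
  rw [← hS, ← vdm (r+n+1) (-(n:ℤ)-1) r,
      show ((r+n+1:ℕ):ℤ) + (-(n:ℤ)-1) = ((r:ℕ):ℤ) by push_cast; ring,
      qbinom_self, mul_one]
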